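/- arXiv:2605.30485 — 6 statements merged into one kernel-verified Lean document; each statement's English description precedes it below -/
import Mathlib

section
/- Let (M_n^θ) be, for each θ, a nonnegative supermartingale-type e-process satisfying Ville's inequality P(sup_n M_n^{θ*} > 1/α) ≤ α under the true parameter θ*. Given integers 1 = n_1 < n_2 < ... and a strictly decreasing sequence α_1 > α_2 > ... tending to 0, define CS_n^* = {θ : M_n^θ ≤ 1/α_{t(n)}} where t(n) is the index t with n ∈ [n_t, n_{t+1}). Then almost surely θ* ∈ CS_n^* for all but finitely many n. -/
open MeasureTheory Filter

/-- Almost-sure coverage of the stitched confidence sequence: if `(M n θstar)` satisfies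
Ville's inequality and the thresholds `1/α_{t(n)}` increase along a doubling-type schedule,
then a.s. `θ* ∈ CS_n^* = {θ : M n θ ≤ 1/α_{t(n)}}` for all but finitely many `n`. -/
theorem stmt3 {Ω Θ : Type*} [MeasurableSpace Ω] (P : Measure Ω) [IsProbabilityMeasure P]
    (M : Θ → ℕ → Ω → ℝ) (θstar : Θ)
    (hnonneg : ∀ θ n ω, 0 ≤ M θ n ω)
    (hville : ∀ a ∈ Set.Ioo (0 : ℝ) 1,
      P {ω | ∃ n : ℕ, 1 ≤ n ∧ 1 / a < M θstar n ω} ≤ ENNReal.ofReal a)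
    (nseq : ℕ → ℕ) (hnseq : StrictMono nseq) (hn1 : nseq 1 = 1)
    (α : ℕ → ℝ) (hαpos : ∀ t, α t ∈ Set.Ioo (0 : ℝ) 1)
    (hαanti : StrictAnti α) (hα0 : Tendsto α atTop (nhds 0))
    (tfun : ℕ → ℕ)
    (htfun : ∀ n, 1 ≤ n → nseq (tfun n) ≤ n ∧ n < nseq (tfun n + 1)) :
    ∀ᵐ ω ∂P, ∀ᶠ n in atTop, M θstar n ω ≤ 1 / α (tfun n) := by
  have htt : Tendsto tfun atTop atTop := by
    rw [tendsto_atTop_atTop]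
    intro k
    refine ⟨max 1 (nseq k), fun n hn => ?_⟩
    have h1 : 1 ≤ n := le_trans (le_max_left _ _) hn
    have h2 := (htfun n h1).2
    have h3 : nseq k ≤ n := le_trans (le_max_right _ _) hn
    have h4 : nseq k < nseq (tfun n + 1) := lt_of_le_of_lt h3 h2
    have := hnseq.lt_iff_lt.mp h4
    omega
  rw [ae_iff]
  set B := {ω | ¬ ∀ᶠ n in atTop, M θstar n ω ≤ 1 / α (tfun n)} with hBdef
  have hB : ∀ k, B ⊆ {ω | ∃ n : ℕ, 1 ≤ n ∧ 1 / α k < M θstar n ω} := by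
    intro k ω hω
    simp only [hBdef, Set.mem_setOf_eq, Filter.not_eventually] at hω
    have hev : ∀ᶠ n in atTop, (1 ≤ n ∧ k ≤ tfun n) := by
      filter_upwards [eventually_ge_atTop 1, htt.eventually_ge_atTop k] with n h1 h2
      exact ⟨h1, h2⟩
    obtain ⟨n, hlt, h1, hk⟩ := (hω.and_eventually hev).exists
    push_neg at hlt
    refine ⟨n, h1, lt_of_le_of_lt ?_ hlt⟩
    exact one_div_le_one_div_of_le (hαpos (tfun n)).1 (hαanti.antitone hk)
  have hBle : ∀ k, P B ≤ ENNReal.ofReal (α k) :=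
    fun k => le_trans (measure_mono (hB k)) (hville (α k) (hαpos k))
  have hlim : Tendsto (fun k => ENNReal.ofReal (α k)) atTop (nhds 0) := by
    simpa using ENNReal.tendsto_ofReal hα0
  have hle0 : P B ≤ 0 := ge_of_tendsto' hlim hBle
  exact le_antisymm hle0 zero_le
end

section
/- Under the uniform growth inequality P(∀θ, log M_n^θ ≥ D_n(|θ-θ*|, δ)) ≥ 1-δ with D_n strictly increasing in its first argument with inverse φ_n, and with M_n^{θ*} an e-value under θ*, any minimizer θ̃_n of θ ↦ M_n^θ satisfies P(|θ̃_n - θ*| ≤ φ_n(log(1/α), δ)) ≥ 1 - δ - α for every α, δ ∈ (0,1). -/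
open MeasureTheory

/-- Master theorem, estimator part: under the uniform growth inequality and the e-value
property at θ*, any ME-estimator satisfies
`P(|θ̃ - θ*| ≤ φ(log(1/α), δ)) ≥ 1 - δ - α`. -/
theorem stmt5 {Ω : Type*} [MeasurableSpace Ω] (P : Measure Ω) [IsProbabilityMeasure P]
    (Θ : Set ℝ) (θstar : ℝ) (hθstar : θstar ∈ Θ)
    (M : ℝ → Ω → ℝ) (hMnonneg : ∀ θ ω, 0 ≤ M θ ω)
    (hmeas : ∀ θ, Measurable (M θ))
    (hint : Integrable (M θstar) P)
    (hE : ∫ ω, M θstar ω ∂P ≤ 1)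
    (D : ℝ → ℝ → ℝ) (φ : ℝ → ℝ → ℝ)
    (δ : ℝ) (hδ : δ ∈ Set.Ioo (0 : ℝ) 1)
    (hDmono : StrictMonoOn (fun x => D x δ) (Set.Ici 0))
    (hφ : ∀ h, 0 ≤ h → 0 ≤ φ h δ ∧ D (φ h δ) δ = h)
    (hUGI : ENNReal.ofReal (1 - δ) ≤
      P {ω | ∀ θ ∈ Θ, D (|θ - θstar|) δ ≤ Real.log (M θ ω)})
    (est : Ω → ℝ) (hestmem : ∀ ω, est ω ∈ Θ)
    (hmin : ∀ ω, ∀ θ ∈ Θ, M (est ω) ω ≤ M θ ω)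
    (α : ℝ) (hα : α ∈ Set.Ioo (0 : ℝ) 1) :
    ENNReal.ofReal (1 - δ - α) ≤
      P {ω | |est ω - θstar| ≤ φ (Real.log (1 / α)) δ} := by
  obtain ⟨hα0, hα1⟩ := hα
  have hα0' : 0 < (1 : ℝ) / α := by positivity
  have h1α : 1 ≤ 1 / α := by rw [le_div_iff₀ hα0]; linarith
  have hlog0 : 0 ≤ Real.log (1 / α) := Real.log_nonneg h1α
  obtain ⟨hφ0, hφD⟩ := hφ _ hlog0
  set A := {ω | ∀ θ ∈ Θ, D (|θ - θstar|) δ ≤ Real.log (M θ ω)}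
  set C := {ω | 1 / α ≤ M θstar ω}
  -- Markov: P C ≤ α
  have hmarkov : P C ≤ ENNReal.ofReal α := by
    have h := mul_meas_ge_le_integral_of_nonneg
      (Filter.Eventually.of_forall (hMnonneg θstar)) hint (1 / α)
    have h2 : (P C).toReal ≤ α := by
      have := h.trans hE
      rw [div_mul_eq_mul_div, one_mul, div_le_one hα0] at this
      exact this
    have hfin : P C ≠ ⊤ := measure_ne_top P C
    rw [← ENNReal.ofReal_toReal hfin]
    exact ENNReal.ofReal_le_ofReal h2
  -- A \ C ⊆ target
  have hsub : A \ C ⊆ {ω | |est ω - θstar| ≤ φ (Real.log (1 / α)) δ} := by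
    rintro ω ⟨hA, hC⟩
    have hMlt : M θstar ω < 1 / α := lt_of_not_ge hC
    have hMest : M (est ω) ω < 1 / α := lt_of_le_of_lt (hmin ω θstar hθstar) hMlt
    have hlogle : Real.log (M (est ω) ω) ≤ Real.log (1 / α) := by
      rcases eq_or_lt_of_le (hMnonneg (est ω) ω) with h0 | h0
      · rw [← h0, Real.log_zero]; exact hlog0
      · exact (Real.log_le_log_iff h0 hα0').mpr hMest.le
    have hD : D (|est ω - θstar|) δ ≤ Real.log (1 / α) :=
      le_trans (hA (est ω) (hestmem ω)) hlogle
    by_contra hcon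
    simp only [Set.mem_setOf_eq] at hcon
    push_neg at hcon
    have : D (φ (Real.log (1 / α)) δ) δ < D (|est ω - θstar|) δ :=
      hDmono (Set.mem_Ici.mpr hφ0) (Set.mem_Ici.mpr (abs_nonneg _)) hcon
    rw [hφD] at this
    linarith
  calc ENNReal.ofReal (1 - δ - α)
      ≤ ENNReal.ofReal (1 - δ) - ENNReal.ofReal α := by
        rw [← ENNReal.ofReal_sub _ hα0.le]
    _ ≤ P A - P C := tsub_le_tsub hUGI hmarkov
    _ ≤ P (A \ C) := le_measure_diff
    _ ≤ _ := measure_mono hsub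
end

section
/- Let M_n = ∑_{t=1}^n X_t be a square-integrable martingale with respect to a filtration (F_t), with predictable quadratic variation ⟨M⟩_n = ∑_{t=1}^n E[X_t² | F_{t-1}]. If ⟨M⟩_n = o_p(n), i.e., ⟨M⟩_n / n → 0 in probability, then M_n / √n → 0 in probability. -/
open MeasureTheory Filter

lemma mulint {Ω} [MeasurableSpace Ω] {P : Measure Ω} {f g : Ω → ℝ}
    (hf : MemLp f 2 P) (hg : MemLp g 2 P) : Integrable (fun ω => f ω * g ω) P := by
  have h := (((hf.add hg).integrable_sq.sub hf.integrable_sq).sub hg.integrable_sq).const_mul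
    ((1:ℝ)/2)
  refine h.congr (Filter.EventuallyEq.of_eq ?_)
  funext ω
  simp only [Pi.sub_apply, Pi.add_apply]
  ring

/-- If a square-integrable martingale `M_n = ∑_{t=1}^n X_t` has predictable quadratic
variation `⟨M⟩_n = ∑_{t=1}^n E[X_t² | F_{t-1}]` that is `o_p(n)`, then `M_n = o_p(√n)`. -/
theorem stmt11 {Ω : Type*} [MeasurableSpace Ω] (P : Measure Ω) [IsProbabilityMeasure P]
    (ℱ : Filtration ℕ ‹MeasurableSpace Ω›) (X : ℕ → Ω → ℝ)
    (hL2 : ∀ t, MemLp (X t) 2 P)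
    (hmart : Martingale (fun n ω => ∑ t ∈ Finset.Icc 1 n, X t ω) ℱ P)
    (Q : ℕ → Ω → ℝ)
    (hQ : ∀ n ω, Q n ω = ∑ t ∈ Finset.Icc 1 n, (P[fun ω' => (X t ω') ^ 2 | ℱ (t - 1)]) ω)
    (hQo : TendstoInMeasure P (fun n ω => Q n ω / n) atTop 0) :
    TendstoInMeasure P
      (fun n ω => (∑ t ∈ Finset.Icc 1 n, X t ω) / Real.sqrt n) atTop 0 := by
  classical
  set M : ℕ → Ω → ℝ := fun n ω => ∑ t ∈ Finset.Icc 1 n, X t ω with hMdef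
  -- basic integrability facts
  have hML2 : ∀ n, MemLp (M n) 2 P := by
    intro n
    have h := memLp_finset_sum' (Finset.Icc 1 n) (fun t (_ : t ∈ Finset.Icc 1 n) => hL2 t)
    rwa [Finset.sum_fn] at h
  have hMint : ∀ n, Integrable (M n) P := fun n => (hML2 n).integrable one_le_two
  have hM2int : ∀ n, Integrable (fun ω => M n ω ^ 2) P := fun n => (hML2 n).integrable_sq
  have hQint : ∀ n, Integrable (Q n) P := by
    intro n
    have : Q n = fun ω => ∑ t ∈ Finset.Icc 1 n, (P[fun ω' => (X t ω') ^ 2 | ℱ (t - 1)]) ω :=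
      funext (hQ n)
    rw [this, ← Finset.sum_fn]
    exact integrable_finset_sum' _ fun t _ => integrable_condExp
  -- measurability of Q
  have hQmeas : ∀ n k, n ≤ k + 1 → StronglyMeasurable[ℱ k] (Q n) := by
    intro n k hnk
    have : Q n = fun ω => ∑ t ∈ Finset.Icc 1 n, (P[fun ω' => (X t ω') ^ 2 | ℱ (t - 1)]) ω :=
      funext (hQ n)
    rw [this]
    refine Finset.stronglyMeasurable_fun_sum _ fun t ht => ?_
    have ht' : t - 1 ≤ k := by
      rw [Finset.mem_Icc] at ht; omega
    exact stronglyMeasurable_condExp.mono (ℱ.mono ht')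
  have hM0 : M 0 = fun _ => (0:ℝ) := by
    funext ω; simp [hMdef]
  have hQ0 : Q 0 = fun _ => (0:ℝ) := by
    funext ω; simp [hQ 0 ω]
  have hX0 : ∀ n, P[X (n + 1) | ℱ n] =ᵐ[P] 0 := by
    intro n
    have hsplit : X (n + 1) = M (n + 1) - M n := by
      funext ω
      simp only [hMdef, Pi.sub_apply, Finset.sum_Icc_succ_top (Nat.le_add_left 1 n)]
      ring
    rw [hsplit]
    filter_upwards [condExp_sub (μ := P) (m := ℱ n) (hMint (n + 1)) (hMint n),
      hmart.condExp_ae_eq (Nat.le_succ n), hmart.condExp_ae_eq (le_refl n)] with ω h1 h2 h3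
    simp only [h1, Pi.sub_apply, h2, h3, Pi.zero_apply, sub_self]
  have gmart : Martingale (fun n ω => M n ω ^ 2 - Q n ω) ℱ P := by
    apply martingale_nat
    · intro n
      have hsm : StronglyMeasurable[ℱ n] (fun ω => M n ω ^ 2) := by
        have := (hmart.stronglyAdapted n).mul (hmart.stronglyAdapted n)
        simpa [sq, Pi.mul_def] using this
      exact hsm.sub (hQmeas n n (by omega))
    · exact fun n => (hM2int n).sub (hQint n)
    · intro n
      set c : Ω → ℝ := P[fun ω' => X (n + 1) ω' ^ 2 | ℱ n] with hcdef
      set A : Ω → ℝ := fun ω => M n ω ^ 2 - Q n ω with hAdef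
      set B : Ω → ℝ := fun ω => (2 * M n ω) * X (n + 1) ω with hBdef
      set C : Ω → ℝ := fun ω => X (n + 1) ω ^ 2 - c ω with hCdef
      have hfeq : (fun ω => M (n + 1) ω ^ 2 - Q (n + 1) ω) = A + B + C := by
        funext ω
        have h1 : M (n + 1) ω = M n ω + X (n + 1) ω := by
          simp only [hMdef, Finset.sum_Icc_succ_top (Nat.le_add_left 1 n)]
        have h2 : Q (n + 1) ω = Q n ω + c ω := by
          rw [hQ (n + 1) ω, hQ n ω, Finset.sum_Icc_succ_top (Nat.le_add_left 1 n), hcdef]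
          simp [Nat.add_sub_cancel]
        simp only [Pi.add_apply, hAdef, hBdef, hCdef, h1, h2]
        ring
      have hAint : Integrable A P := (hM2int n).sub (hQint n)
      have hBint : Integrable B P := by
        have := mulint ((hML2 n).const_mul (2:ℝ)) (hL2 (n + 1))
        exact this
      have hCint : Integrable C P := (hL2 (n + 1)).integrable_sq.sub integrable_condExp
      have eA : P[A | ℱ n] = A :=
        condExp_of_stronglyMeasurable (ℱ.le n)
          (by
            have hsm : StronglyMeasurable[ℱ n] (fun ω => M n ω ^ 2) := by
              have := (hmart.stronglyAdapted n).mul (hmart.stronglyAdapted n)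
              simpa [sq, Pi.mul_def] using this
            exact hsm.sub (hQmeas n n (by omega))) hAint
      have eB : P[B | ℱ n] =ᵐ[P] 0 := by
        have hsm : StronglyMeasurable[ℱ n] (fun ω => 2 * M n ω) :=
          stronglyMeasurable_const.mul (hmart.stronglyAdapted n)
        have hBmul := condExp_mul_of_stronglyMeasurable_left (μ := P) hsm
          (by exact hBint) ((hL2 (n + 1)).integrable one_le_two)
        filter_upwards [hBmul, hX0 n] with ω h1 h2
        have : B ω = ((fun ω => 2 * M n ω) * X (n + 1)) ω := by
          simp [hBdef]
        rw [Pi.zero_apply]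
        calc (P[B | ℱ n]) ω = ((fun ω => 2 * M n ω) * P[X (n + 1) | ℱ n]) ω := h1
          _ = 2 * M n ω * (P[X (n + 1) | ℱ n]) ω := rfl
          _ = 0 := by rw [h2, Pi.zero_apply, mul_zero]
      have eC : P[C | ℱ n] =ᵐ[P] 0 := by
        have hsub := condExp_sub (μ := P) (m := ℱ n) (hL2 (n + 1)).integrable_sq
          (integrable_condExp (f := fun ω' => X (n + 1) ω' ^ 2) (m := ℱ n))
        have ec : P[c | ℱ n] = c :=
          condExp_of_stronglyMeasurable (ℱ.le n) stronglyMeasurable_condExp integrable_condExp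
        filter_upwards [hsub] with ω h1
        have : (P[C | ℱ n]) ω = (P[fun ω' => X (n + 1) ω' ^ 2 | ℱ n]) ω - (P[c | ℱ n]) ω := h1
        rw [Pi.zero_apply, this, ec, hcdef, sub_self]
      have hadd1 := condExp_add (μ := P) (m := ℱ n) (hAint.add hBint) hCint
      have hadd2 := condExp_add (μ := P) (m := ℱ n) hAint hBint
      rw [hfeq]
      filter_upwards [hadd1, hadd2, eB, eC] with ω h1 h2 hb hc
      have : (P[A + B + C | ℱ n]) ω = (P[A | ℱ n]) ω + (P[B | ℱ n]) ω + (P[C | ℱ n]) ω := by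
        rw [h1, Pi.add_apply, h2, Pi.add_apply]
      rw [this, eA, hb, hc, Pi.zero_apply, hAdef]
      simp
  -- a.e. monotonicity of Q
  have hQmono : ∀ᵐ ω ∂P, ∀ a b, a ≤ b → Q a ω ≤ Q b ω := by
    have h1 : ∀ᵐ ω ∂P, ∀ t, 0 ≤ (P[fun ω' => (X t ω') ^ 2 | ℱ (t - 1)]) ω :=
      ae_all_iff.2 fun t => condExp_nonneg (ae_of_all _ fun ω => sq_nonneg _)
    filter_upwards [h1] with ω hω a b hab
    rw [hQ a ω, hQ b ω]
    exact Finset.sum_le_sum_of_subset_of_nonneg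
      (Finset.Icc_subset_Icc_right hab) (fun t ht _ => hω t)
  -- key estimate
  rw [tendstoInMeasure_iff_dist]
  intro ε hε
  have key : ∀ δ : ℝ, 0 < δ → ∀ n : ℕ, 1 ≤ n →
      P {ω | ε ≤ dist (M n ω / Real.sqrt n) 0} ≤
        ENNReal.ofReal (δ / ε ^ 2) + P {ω | δ ≤ dist (Q n ω / n) 0} := by
    intro δ hδ n hn
    have hn0 : (0:ℝ) < n := by exact_mod_cast hn
    set τ : Ω → ℕ := hittingBtwn (fun k ω => Q (k + 1) ω) (Set.Ioi (δ * n)) 0 n with hτdef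
    set σ : Ω → WithTop ℕ := fun ω => (τ ω : WithTop ℕ) with hσdef
    have hadp : StronglyAdapted ℱ (fun k ω => Q (k + 1) ω) := fun k => hQmeas (k + 1) k le_rfl
    have hτ : IsStoppingTime ℱ σ := hadp.adapted.isStoppingTime_hittingBtwn measurableSet_Ioi
    have hτle : ∀ ω, τ ω ≤ n := fun ω => hittingBtwn_le ω
    -- expectation of the stopped martingale is zero
    have hstop0 : ∫ ω, stoppedValue (fun n ω => M n ω ^ 2 - Q n ω) σ ω ∂P = 0 := by
      set g : ℕ → Ω → ℝ := fun n ω => M n ω ^ 2 - Q n ω with hgdef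
      have hg0 : ∀ ω, g 0 ω = 0 := by
        intro ω; simp [hgdef, hM0, hQ0]
      have hc0 : IsStoppingTime ℱ (fun _ : Ω => ((0:ℕ) : WithTop ℕ)) := isStoppingTime_const ℱ 0
      have h1 := gmart.submartingale.expected_stoppedValue_mono hc0 hτ
        (fun ω => WithTop.coe_le_coe.2 (Nat.zero_le _)) (fun ω => WithTop.coe_le_coe.2 (hτle ω))
      have h2 := gmart.neg.submartingale.expected_stoppedValue_mono hc0 hτ
        (fun ω => WithTop.coe_le_coe.2 (Nat.zero_le _)) (fun ω => WithTop.coe_le_coe.2 (hτle ω))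
      have hzero : ∀ (u : ℕ → Ω → ℝ), stoppedValue u (fun _ : Ω => ((0:ℕ) : WithTop ℕ)) = u 0 := fun u => rfl
      have hneg : stoppedValue (-g) σ = fun ω => -(stoppedValue g σ ω) := rfl
      rw [hzero] at h1 h2
      rw [hneg] at h2
      have hint0 : ∫ ω, g 0 ω ∂P = 0 := by
        simp only [hg0]; simp
      simp only [Pi.neg_apply] at h2
      rw [integral_neg, integral_neg] at h2
      rw [hint0] at h2
      linarith
    -- hence E[M_τ^2] = E[Q_τ] ≤ δ n
    have hMQint : Integrable (stoppedValue (fun k ω => M k ω ^ 2) σ) P :=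
      integrable_stoppedValue ℕ hτ hM2int (fun ω => WithTop.coe_le_coe.2 (hτle ω))
    have hQτint : Integrable (stoppedValue Q σ) P :=
      integrable_stoppedValue ℕ hτ hQint (fun ω => WithTop.coe_le_coe.2 (hτle ω))
    have hsplit : (stoppedValue (fun n ω => M n ω ^ 2 - Q n ω) σ) =
        fun ω => stoppedValue (fun k ω => M k ω ^ 2) σ ω - stoppedValue Q σ ω := rfl
    have hEeq : ∫ ω, stoppedValue (fun k ω => M k ω ^ 2) σ ω ∂P = ∫ ω, stoppedValue Q σ ω ∂P := by
      have := hstop0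
      rw [hsplit, integral_sub hMQint hQτint] at this
      linarith
    have hQτbdd : ∀ ω, stoppedValue Q σ ω ≤ δ * n := by
      intro ω
      rcases Nat.eq_zero_or_pos (τ ω) with h0 | hpos
      · have : stoppedValue Q σ ω = Q 0 ω := by show Q (τ ω) ω = Q 0 ω; rw [h0]
        rw [this, hQ0]
        positivity
      · obtain ⟨k, hk⟩ := Nat.exists_eq_succ_of_ne_zero hpos.ne'
        have hklt : k < τ ω := by omega
        have := notMem_of_lt_hittingBtwn (m := n) (hτdef ▸ hklt) (Nat.zero_le k)
        simp only [Set.mem_Ioi, not_lt] at this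
        have : Q (k + 1) ω ≤ δ * n := this
        calc stoppedValue Q σ ω = Q (τ ω) ω := rfl
          _ = Q (k + 1) ω := by rw [hk]
          _ ≤ δ * n := this
    have hEQle : ∫ ω, stoppedValue Q σ ω ∂P ≤ δ * n := by
      calc ∫ ω, stoppedValue Q σ ω ∂P ≤ ∫ _, δ * n ∂P :=
            integral_mono hQτint (integrable_const _) hQτbdd
        _ = δ * n := by simp
    -- Markov / Chebyshev
    have hmarkov : ε ^ 2 * n * (P {ω | ε ^ 2 * n ≤ stoppedValue (fun k ω => M k ω ^ 2) σ ω}).toReal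
        ≤ δ * n := by
      refine le_trans (mul_meas_ge_le_integral_of_nonneg ?_ hMQint _) (hEeq ▸ hEQle)
      exact ae_of_all _ fun ω => sq_nonneg _
    have hchev : P {ω | ε ^ 2 * n ≤ stoppedValue (fun k ω => M k ω ^ 2) σ ω} ≤
        ENNReal.ofReal (δ / ε ^ 2) := by
      have hfin : P {ω | ε ^ 2 * n ≤ stoppedValue (fun k ω => M k ω ^ 2) σ ω} ≠ ⊤ :=
        measure_ne_top _ _
      rw [← ENNReal.ofReal_toReal hfin]
      apply ENNReal.ofReal_le_ofReal
      have hpos : (0:ℝ) < ε ^ 2 * n := by positivity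
      have h2 : (P {ω | ε ^ 2 * ↑n ≤ stoppedValue (fun k ω => M k ω ^ 2) σ ω}).toReal ≤
          δ * ↑n / (ε ^ 2 * ↑n) := by
        rw [le_div_iff₀ hpos]
        nlinarith [hmarkov]
      have h3 : δ * (n:ℝ) / (ε ^ 2 * ↑n) = δ / ε ^ 2 :=
        mul_div_mul_right _ _ hn0.ne'
      linarith
    -- a.e. inclusion
    have hincl : ∀ᵐ ω ∂P, ω ∈ {ω | ε ≤ dist (M n ω / Real.sqrt n) 0} →
        ω ∈ {ω | ε ^ 2 * n ≤ stoppedValue (fun k ω => M k ω ^ 2) σ ω} ∪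
          {ω | δ ≤ dist (Q n ω / n) 0} := by
      filter_upwards [hQmono] with ω hmono hω
      simp only [Set.mem_setOf_eq, Real.dist_eq, sub_zero] at hω
      by_cases hτn : τ ω = n
      · left
        show ε ^ 2 * n ≤ M (τ ω) ω ^ 2; rw [hτn]
        have hsq : Real.sqrt n > 0 := Real.sqrt_pos.2 hn0
        have h1 : ε * Real.sqrt n ≤ |M n ω| := by
          rw [abs_div, abs_of_nonneg (Real.sqrt_nonneg _)] at hω
          exact (le_div_iff₀ hsq).1 hω
        have h2 : (ε * Real.sqrt n) ^ 2 ≤ |M n ω| ^ 2 := by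
          apply pow_le_pow_left₀ (by positivity) h1
        rw [mul_pow, Real.sq_sqrt hn0.le, sq_abs] at h2
        exact h2
      · right
        have hτlt : τ ω < n := lt_of_le_of_ne (hτle ω) hτn
        have hmem := hittingBtwn_mem_set_of_hittingBtwn_lt
          (show hittingBtwn (fun k ω => Q (k + 1) ω) (Set.Ioi (δ * ↑n)) 0 n ω < n from hτlt)
        rw [← hτdef] at hmem
        simp only [Set.mem_Ioi] at hmem
        have hQn : δ * n < Q n ω :=
          lt_of_lt_of_le hmem (hmono (τ ω + 1) n (by omega))
        simp only [Set.mem_setOf_eq, Real.dist_eq, sub_zero]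
        have : δ ≤ Q n ω / n := by
          rw [le_div_iff₀ hn0]
          linarith
        exact this.trans (le_abs_self _)
    calc P {ω | ε ≤ dist (M n ω / Real.sqrt n) 0}
        ≤ P ({ω | ε ^ 2 * n ≤ stoppedValue (fun k ω => M k ω ^ 2) σ ω} ∪
            {ω | δ ≤ dist (Q n ω / n) 0}) := measure_mono_ae hincl
      _ ≤ P {ω | ε ^ 2 * n ≤ stoppedValue (fun k ω => M k ω ^ 2) σ ω} +
          P {ω | δ ≤ dist (Q n ω / n) 0} := measure_union_le _ _
      _ ≤ ENNReal.ofReal (δ / ε ^ 2) + P {ω | δ ≤ dist (Q n ω / n) 0} :=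
          add_le_add_left hchev _
  rw [ENNReal.tendsto_nhds_zero]
  intro η hη
  set η' : ENNReal := min η 1 with hη'def
  have hη'top : η' ≠ ⊤ := by
    simp [hη'def]
  have hη'0 : η' ≠ 0 := (lt_min hη zero_lt_one).ne'
  have hη'pos : 0 < η'.toReal := ENNReal.toReal_pos hη'0 hη'top
  set δ : ℝ := ε ^ 2 * η'.toReal / 2 with hδdef
  have hδpos : 0 < δ := by positivity
  have hofReal : ENNReal.ofReal (δ / ε ^ 2) ≤ η / 2 := by
    have h1 : δ / ε ^ 2 = η'.toReal / 2 := by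
      rw [hδdef]; field_simp
    rw [h1]
    have : ENNReal.ofReal (η'.toReal / 2) = η' / 2 := by
      rw [ENNReal.ofReal_div_of_pos (by norm_num), ENNReal.ofReal_toReal hη'top]
      norm_num
    rw [this]
    exact ENNReal.div_le_div_right (min_le_left _ _) 2
  have h2 := (ENNReal.tendsto_nhds_zero.1 (tendstoInMeasure_iff_dist.1 hQo δ hδpos)) (η / 2)
    (ENNReal.div_pos hη.ne' ENNReal.ofNat_ne_top)
  filter_upwards [h2, eventually_ge_atTop 1] with n hn hn1
  calc P {ω | ε ≤ dist (M n ω / Real.sqrt n) 0}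
      ≤ ENNReal.ofReal (δ / ε ^ 2) + P {ω | δ ≤ dist (Q n ω / n) 0} := key δ hδpos n hn1
    _ ≤ η / 2 + η / 2 := add_le_add hofReal hn
    _ = η := ENNReal.add_halves η
end

section
/- Let x_1,…,x_n ∈ [0,1] be any real numbers with sample mean x̄ = (1/n)∑ x_t. Then the minimax value min_{θ∈[0,1]} sup_{λ∈[-1/(1-θ), 1/θ]} ∑_{t=1}^n log(1 + λ(x_t - θ)) equals 0, and it is attained at θ = x̄ (with optimal λ = 0); that is, the saddle-point ME-estimator of bounded betting is exactly the sample mean. -/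
open Finset

/-- The saddle-point ME-estimator of bounded betting is the sample mean: the minimax value
`min_{θ∈[0,1]} sup_{λ∈Λ(θ)} ∑_t log(1 + λ(x_t - θ))` equals `0` and is attained at
`θ = x̄` (with optimal `λ = 0`).  Here `Λ(θ) = {λ : 1 + λ(y - θ) ≥ 0 for all y ∈ [0,1]}`,
and the objective is valued in `EReal`, being `⊥ = -∞` when some factor is nonpositive. -/
theorem stmt12 (n : ℕ) (hn : 1 ≤ n) (x : ℕ → ℝ)
    (hx : ∀ t ∈ Icc 1 n, x t ∈ Set.Icc (0 : ℝ) 1)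
    (xbar : ℝ) (hxbar : xbar = (∑ t ∈ Icc 1 n, x t) / n)
    (g : ℝ → ℝ → EReal)
    (hg : ∀ θ lam, g θ lam =
      if ∀ t ∈ Icc 1 n, 0 < 1 + lam * (x t - θ) then
        ((∑ t ∈ Icc 1 n, Real.log (1 + lam * (x t - θ)) : ℝ) : EReal)
      else ⊥)
    (Λ : ℝ → Set ℝ)
    (hΛ : ∀ θ, Λ θ = {l : ℝ | ∀ y ∈ Set.Icc (0 : ℝ) 1, 0 ≤ 1 + l * (y - θ)}) :
    IsLeast {v : EReal | ∃ θ ∈ Set.Icc (0 : ℝ) 1, v = ⨆ lam ∈ Λ θ, g θ lam} 0 ∧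
      (⨆ lam ∈ Λ xbar, g xbar lam) = 0 ∧ g xbar 0 = 0 := by
  have hn' : (0 : ℝ) < n := by exact_mod_cast hn
  -- g θ 0 = 0 for every θ
  have hg0 : ∀ θ : ℝ, g θ 0 = 0 := by
    intro θ
    rw [hg]
    simp
  -- 0 ∈ Λ θ for every θ
  have h0Λ : ∀ θ : ℝ, (0 : ℝ) ∈ Λ θ := by
    intro θ
    rw [hΛ]
    intro y _
    simp
  -- sup over Λ θ is ≥ 0 for every θ
  have hsup_ge : ∀ θ : ℝ, (0 : EReal) ≤ ⨆ lam ∈ Λ θ, g θ lam := fun θ =>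
    le_iSup₂_of_le 0 (h0Λ θ) (hg0 θ).ge
  -- sum of deviations from the mean is zero
  have hsum : ∑ t ∈ Icc 1 n, (x t - xbar) = 0 := by
    rw [Finset.sum_sub_distrib, Finset.sum_const, Nat.card_Icc]
    simp only [Nat.add_sub_cancel, hxbar, nsmul_eq_mul]
    field_simp
    ring
  -- g xbar lam ≤ 0 for every lam
  have hle : ∀ lam : ℝ, g xbar lam ≤ 0 := by
    intro lam
    rw [hg]
    split_ifs with h
    · have : ∑ t ∈ Icc 1 n, Real.log (1 + lam * (x t - xbar)) ≤ 0 := by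
        calc ∑ t ∈ Icc 1 n, Real.log (1 + lam * (x t - xbar))
            ≤ ∑ t ∈ Icc 1 n, lam * (x t - xbar) := by
              apply Finset.sum_le_sum
              intro t ht
              have := Real.log_le_sub_one_of_pos (h t ht)
              linarith
          _ = lam * ∑ t ∈ Icc 1 n, (x t - xbar) := by rw [Finset.mul_sum]
          _ = 0 := by rw [hsum, mul_zero]
      exact_mod_cast this
    · exact bot_le
  have hsupxbar : (⨆ lam ∈ Λ xbar, g xbar lam) = 0 :=
    le_antisymm (iSup₂_le fun lam _ => hle lam) (hsup_ge xbar)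
  -- xbar ∈ [0,1]
  have hxbar01 : xbar ∈ Set.Icc (0 : ℝ) 1 := by
    constructor
    · rw [hxbar]
      apply div_nonneg _ hn'.le
      exact Finset.sum_nonneg fun t ht => (hx t ht).1
    · rw [hxbar, div_le_one hn']
      calc ∑ t ∈ Icc 1 n, x t ≤ ∑ t ∈ Icc 1 n, (1 : ℝ) :=
            Finset.sum_le_sum fun t ht => (hx t ht).2
        _ = n := by rw [Finset.sum_const, Nat.card_Icc]; simp
  refine ⟨⟨⟨xbar, hxbar01, hsupxbar.symm⟩, ?_⟩, hsupxbar, hg0 xbar⟩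
  rintro v ⟨θ, hθ, rfl⟩
  exact hsup_ge θ
end

section
/- Let ψ : (-λ_min, λ_max) → ℝ be a convex function with ψ(0) = 0 whose convex conjugate ψ*(u) = sup_λ {λu - ψ(λ)} is uniquely minimized at u = 0 with ψ*(0) = 0. Let S_n = x_1 + ... + x_n be fixed reals and V_n : ℝ → (0,∞) any positive function of θ. Then the minimizer over θ ∈ ℝ of sup_λ { λ(S_n - nθ) - ψ(λ) V_n(θ) } is θ = S_n / n, the sample mean. -/
/-- Sub-ψ saddle point: if ψ is convex with ψ(0) = 0 and its conjugate
`ψ*(u) = sup_λ (λu - ψ(λ))` is uniquely minimized at `0` with `ψ*(0) = 0`, then for any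
positive variance function `V`, the map `θ ↦ sup_λ (λ(S - nθ) - ψ(λ)V(θ))` is uniquely
minimized at the sample mean `θ = S/n`, where the minimum value is `0`. -/
theorem stmt14 (lmin lmax : ℝ) (h0mem : (0 : ℝ) ∈ Set.Ioo (-lmin) lmax)
    (ψ : ℝ → ℝ) (hψconv : ConvexOn ℝ (Set.Ioo (-lmin) lmax) ψ) (hψ0 : ψ 0 = 0)
    (ψstar : ℝ → EReal)
    (hconj : ∀ u : ℝ, ψstar u = ⨆ l ∈ Set.Ioo (-lmin) lmax, ((l * u - ψ l : ℝ) : EReal))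
    (hmin0 : ψstar 0 = 0) (huniq : ∀ u : ℝ, u ≠ 0 → 0 < ψstar u)
    (V : ℝ → ℝ) (hV : ∀ θ, 0 < V θ)
    (n : ℕ) (hn : 1 ≤ n) (S : ℝ)
    (G : ℝ → EReal)
    (hG : ∀ θ, G θ = ⨆ l ∈ Set.Ioo (-lmin) lmax,
      ((l * (S - n * θ) - ψ l * V θ : ℝ) : EReal)) :
    G (S / n) = 0 ∧ ∀ θ : ℝ, θ ≠ S / n → G (S / n) < G θ := by
  have hn' : (n : ℝ) ≠ 0 := by positivity
  -- ψ is nonneg on the interval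
  have hψnonneg : ∀ l ∈ Set.Ioo (-lmin) lmax, 0 ≤ ψ l := by
    intro l hl
    have h := (hconj 0).symm.trans hmin0
    have hle : ((l * 0 - ψ l : ℝ) : EReal) ≤ 0 := by
      rw [← h]
      exact le_biSup (fun l => ((l * 0 - ψ l : ℝ) : EReal)) hl
    have : (l * 0 - ψ l : ℝ) ≤ (0 : ℝ) := by exact_mod_cast hle
    linarith
  have hSm : S - (n : ℝ) * (S / n) = 0 := by field_simp; ring
  have hGm : G (S / n) = 0 := by
    rw [hG]
    apply le_antisymm
    · apply iSup₂_le
      intro l hl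
      have : (l * (S - (n:ℝ) * (S / n)) - ψ l * V (S / n) : ℝ) ≤ 0 := by
        rw [hSm]
        have := hψnonneg l hl
        have := (hV (S / n)).le
        nlinarith
      exact_mod_cast this
    · have h0 : ((0 : ℝ) : EReal) ≤ ⨆ l ∈ Set.Ioo (-lmin) lmax,
          ((l * (S - n * (S / n)) - ψ l * V (S / n) : ℝ) : EReal) := by
        have := le_biSup (fun l => ((l * (S - n * (S / n)) - ψ l * V (S / n) : ℝ) : EReal)) h0mem
        simpa [hψ0] using this
      simpa using h0
  refine ⟨hGm, fun θ hθ => ?_⟩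
  rw [hGm]
  set u : ℝ := (S - n * θ) / V θ with hu
  have hVθ := hV θ
  have hSθ : S - (n : ℝ) * θ ≠ 0 := by
    intro h
    apply hθ
    field_simp
    linarith
  have hu0 : u ≠ 0 := div_ne_zero hSθ hVθ.ne'
  have hpos := huniq u hu0
  rw [hconj u] at hpos
  -- extract a witness
  rw [show (⨆ l ∈ Set.Ioo (-lmin) lmax, ((l * u - ψ l : ℝ) : EReal)) =
      ⨆ l : ℝ, ⨆ _ : l ∈ Set.Ioo (-lmin) lmax, ((l * u - ψ l : ℝ) : EReal) from rfl,
    lt_iSup_iff] at hpos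
  obtain ⟨l, hl⟩ := hpos
  rw [lt_iSup_iff] at hl
  obtain ⟨hls, hl⟩ := hl
  have hlr : (0 : ℝ) < l * u - ψ l := by exact_mod_cast hl
  have key : (0 : ℝ) < l * (S - n * θ) - ψ l * V θ := by
    have hrw : l * (S - (n:ℝ) * θ) = l * u * V θ := by
      rw [hu]; field_simp
    rw [hrw]
    nlinarith
  calc (0 : EReal) < ((l * (S - n * θ) - ψ l * V θ : ℝ) : EReal) := by exact_mod_cast key
    _ ≤ G θ := by rw [hG]; exact le_biSup (fun l => ((l * (S - n * θ) - ψ l * V θ : ℝ) : EReal)) hls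
end

section
/- For σ² > 0 and 0 < β < 2/σ², define v_β = σ²(5 − 6βσ² + 2β²σ⁴)/(2 − βσ²)². Then v_β ≥ σ² with equality if and only if β = 1/σ², and v_β → (5/4)σ² as β → 0⁺. -/
open Filter

/-- Properties of the asymptotic variance `v_β = σ²(5 - 6βσ² + 2β²σ⁴)/(2 - βσ²)²` for
`0 < β < 2/σ²`: it is at least `σ²`, with equality iff `β = 1/σ²`, and it tends to
`(5/4)σ²` as `β → 0⁺`. -/
theorem stmt18 (σ2 : ℝ) (hσ : 0 < σ2) (v : ℝ → ℝ)
    (hv : ∀ β, v β = σ2 * (5 - 6 * β * σ2 + 2 * β ^ 2 * σ2 ^ 2) / (2 - β * σ2) ^ 2) :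
    (∀ β ∈ Set.Ioo (0 : ℝ) (2 / σ2), σ2 ≤ v β ∧ (v β = σ2 ↔ β = 1 / σ2)) ∧
      Tendsto v (nhdsWithin 0 (Set.Ioi 0)) (nhds ((5 / 4) * σ2)) := by
  constructor
  · rintro β ⟨hb0, hb2⟩
    have hβσ : β * σ2 < 2 := by
      have := (lt_div_iff₀ hσ).mp hb2
      linarith
    have hd : (0:ℝ) < (2 - β * σ2) ^ 2 := by nlinarith
    have hkey : v β - σ2 = σ2 * (β * σ2 - 1) ^ 2 / (2 - β * σ2) ^ 2 := by
      rw [hv, eq_div_iff hd.ne', sub_mul, div_mul_cancel₀ _ hd.ne']; ring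
    constructor
    · have h0 : 0 ≤ σ2 * (β * σ2 - 1) ^ 2 / (2 - β * σ2) ^ 2 :=
        div_nonneg (by positivity) hd.le
      linarith
    · constructor
      · intro h
        have h2 : σ2 * (β * σ2 - 1) ^ 2 / (2 - β * σ2) ^ 2 = 0 := by rw [← hkey, h]; ring
        have h3 : σ2 * (β * σ2 - 1) ^ 2 = 0 := by
          exact (div_eq_zero_iff.mp h2).resolve_right hd.ne'
        have h4 : (β * σ2 - 1) ^ 2 = 0 := by
          rcases mul_eq_zero.mp h3 with h | h
          · exact absurd h hσ.ne'
          · exact h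
        have h5 : β * σ2 = 1 := by nlinarith [sq_nonneg (β * σ2 - 1)]
        field_simp
        linarith
      · intro h
        subst h
        have h1 : (1:ℝ) / σ2 * σ2 = 1 := by field_simp
        rw [hv]
        rw [show 6 * (1 / σ2) * σ2 = 6 * (1 / σ2 * σ2) by ring,
          show 2 * (1 / σ2) ^ 2 * σ2 ^ 2 = 2 * (1 / σ2 * σ2) ^ 2 by ring, h1]
        norm_num
  · have hc : Tendsto (fun β : ℝ => σ2 * (5 - 6 * β * σ2 + 2 * β ^ 2 * σ2 ^ 2) / (2 - β * σ2) ^ 2)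
        (nhds 0) (nhds ((5 / 4) * σ2)) := by
      have : ContinuousAt (fun β : ℝ => σ2 * (5 - 6 * β * σ2 + 2 * β ^ 2 * σ2 ^ 2) / (2 - β * σ2) ^ 2) 0 := by
        apply ContinuousAt.div
        · fun_prop
        · fun_prop
        · norm_num
      have h0 : σ2 * (5 - 6 * 0 * σ2 + 2 * 0 ^ 2 * σ2 ^ 2) / (2 - 0 * σ2) ^ 2 = (5 / 4) * σ2 := by
        norm_num
        ring
      have := this.tendsto
      rwa [h0] at this
    have := hc.mono_left (nhdsWithin_le_nhds (s := Set.Ioi (0:ℝ)))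
    refine this.congr fun β => (hv β).symm
end
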